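/- Let D be a generalized k-junta distribution on {0,1}^n, represented as a Bayesian network in which a set J of k nodes forms an arbitrary DAG among themselves and every node outside J has all of its parents inside J. Let f be a conjunction with d literals over variable set C. Then f̂_S = 0 for every S with S \ (C ∪ J) ≠ ∅ (so f has at most 2^{k+d} nonzero Fourier coefficients), and the spectral norm of f is bounded by L1(f) ≤ 2^{(k+d)/2}. -/
import Mathlib


/-!
A Bayesian network (BN) distribution on {0,1}^n: a DAG on [n] (encoded by parent
sets together with a rank function witnessing acyclicity) and, for each node `v`,
a conditional probability `cond v x ∈ (0,1)` of `X_v = 1` given the parent values,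
depending only on the coordinates in `pa v`.  The joint distribution is
`prob x = ∏ v, P(x_v | x_{pa v})`, and the BN-induced basis functions are
`φ_v(x) = (x_v − μ_{v,x_pa(v)})/σ_{v,x_pa(v)}`, `φ_S = ∏_{v∈S} φ_v`.
-/

open Finset

noncomputable section

/-- Interpret a Boolean as a real number (`true ↦ 1`, `false ↦ 0`). -/
def b2r (b : Bool) : ℝ := if b then 1 else 0

/-- A Bayesian network distribution on `{0,1}^n`. -/
structure BayesNet (n : ℕ) where
  /-- parent set of each node -/
  pa : Fin n → Finset (Fin n)
  /-- the parent relation is acyclic (a DAG) -/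
  acyclic : ∃ rank : Fin n → ℕ, ∀ v u, u ∈ pa v → rank u < rank v
  /-- `cond v x = P(X_v = 1 | X_{pa v} = x_{pa v})` -/
  cond : Fin n → (Fin n → Bool) → ℝ
  /-- the conditional probability of `v` depends only on the parents of `v` -/
  cond_local : ∀ v x y, (∀ u ∈ pa v, x u = y u) → cond v x = cond v y
  cond_pos : ∀ v x, 0 < cond v x
  cond_lt_one : ∀ v x, cond v x < 1

namespace BayesNet

variable {n : ℕ}

/-- The joint probability mass function `D(x) = ∏_v P(x_v | x_{pa v})`. -/
def prob (B : BayesNet n) (x : Fin n → Bool) : ℝ :=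
  ∏ v, if x v then B.cond v x else 1 - B.cond v x

/-- Conditional standard deviation `σ_{v, x_{pa v}}`. -/
def sigma (B : BayesNet n) (v : Fin n) (x : Fin n → Bool) : ℝ :=
  Real.sqrt (B.cond v x * (1 - B.cond v x))

/-- BN-induced basis function of a single node. -/
def phi (B : BayesNet n) (v : Fin n) (x : Fin n → Bool) : ℝ :=
  (b2r (x v) - B.cond v x) / B.sigma v x

/-- BN-induced basis function `φ_S = ∏_{v ∈ S} φ_v` (with `φ_∅ ≡ 1`). -/
def phiS (B : BayesNet n) (S : Finset (Fin n)) (x : Fin n → Bool) : ℝ :=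
  ∏ v ∈ S, B.phi v x

/-- Expectation with respect to the BN distribution. -/
def expect (B : BayesNet n) (g : (Fin n → Bool) → ℝ) : ℝ :=
  ∑ x, B.prob x * g x

/-- Fourier coefficient `f̂_S = E_D[f(X) φ_S(X)]`. -/
def coeff (B : BayesNet n) (f : (Fin n → Bool) → ℝ) (S : Finset (Fin n)) : ℝ :=
  B.expect fun x => f x * B.phiS S x

/-- Conditional expectation `E[g(X) | X_u = y_u for all u ∈ A]`. -/
def condExp (B : BayesNet n) (g : (Fin n → Bool) → ℝ) (A : Finset (Fin n))
    (y : Fin n → Bool) : ℝ :=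
  (∑ x ∈ univ.filter (fun x : Fin n → Bool => ∀ u ∈ A, x u = y u), B.prob x * g x) /
  (∑ x ∈ univ.filter (fun x : Fin n → Bool => ∀ u ∈ A, x u = y u), B.prob x)

/-- The union of the parent sets of the nodes of `S`. -/
def paS (B : BayesNet n) (S : Finset (Fin n)) : Finset (Fin n) := S.biUnion B.pa

/-- Spectral norm `L1(f) = Σ_S |f̂_S|`. -/
def L1 (B : BayesNet n) (f : (Fin n → Bool) → ℝ) : ℝ :=
  ∑ S : Finset (Fin n), |B.coeff f S|

end BayesNet



/-- The conjunction `∏_{i∈T1} x_i · ∏_{j∈T0} (1−x_j)` on `{0,1}^n`. -/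
def conj {n : ℕ} (T0 T1 : Finset (Fin n)) (x : Fin n → Bool) : ℝ :=
  (∏ i ∈ T1, b2r (x i)) * ∏ j ∈ T0, (1 - b2r (x j))


namespace BayesNet

variable {n : ℕ}

/-- local conditional probability factor -/
def pfac (B : BayesNet n) (v : Fin n) (x : Fin n → Bool) : ℝ :=
  if x v then B.cond v x else 1 - B.cond v x

lemma pfac_pos (B : BayesNet n) (v : Fin n) (x : Fin n → Bool) : 0 < B.pfac v x := by
  unfold pfac; split
  · exact B.cond_pos v x
  · linarith [B.cond_lt_one v x]

lemma prob_eq (B : BayesNet n) (x : Fin n → Bool) : B.prob x = ∏ v, B.pfac v x := rfl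

lemma prob_pos (B : BayesNet n) (x : Fin n → Bool) : 0 < B.prob x :=
  Finset.prod_pos fun v _ => B.pfac_pos v x

lemma sigma_pos (B : BayesNet n) (v : Fin n) (x : Fin n → Bool) : 0 < B.sigma v x :=
  Real.sqrt_pos.2 (by nlinarith [B.cond_pos v x, B.cond_lt_one v x])

lemma sigma_sq (B : BayesNet n) (v : Fin n) (x : Fin n → Bool) :
    B.sigma v x ^ 2 = B.cond v x * (1 - B.cond v x) :=
  Real.sq_sqrt (by nlinarith [B.cond_pos v x, B.cond_lt_one v x])

lemma cond_update (B : BayesNet n) {v w : Fin n} (hw : w ∉ B.pa v) (x : Fin n → Bool)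
    (b : Bool) : B.cond v (Function.update x w b) = B.cond v x :=
  B.cond_local v _ _ fun u hu => Function.update_of_ne (by rintro rfl; exact hw hu) _ _

lemma sigma_update (B : BayesNet n) {v w : Fin n} (hw : w ∉ B.pa v) (x : Fin n → Bool)
    (b : Bool) : B.sigma v (Function.update x w b) = B.sigma v x := by
  unfold sigma; rw [B.cond_update hw]

lemma pfac_update (B : BayesNet n) {v w : Fin n} (hvw : v ≠ w) (hw : w ∉ B.pa v)
    (x : Fin n → Bool) (b : Bool) : B.pfac v (Function.update x w b) = B.pfac v x := by
  unfold pfac; rw [Function.update_of_ne hvw, B.cond_update hw]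

lemma phi_update (B : BayesNet n) {v w : Fin n} (hvw : v ≠ w) (hw : w ∉ B.pa v)
    (x : Fin n → Bool) (b : Bool) : B.phi v (Function.update x w b) = B.phi v x := by
  unfold phi; rw [Function.update_of_ne hvw, B.cond_update hw, B.sigma_update hw]

lemma sum_split (w : Fin n) (F : (Fin n → Bool) → ℝ) :
    ∑ x, F x = ∑ x ∈ univ.filter (fun x : Fin n → Bool => x w = false),
      (F x + F (Function.update x w true)) := by
  rw [Finset.sum_add_distrib]
  have h1 : ∑ x ∈ univ.filter (fun x : Fin n → Bool => x w = false),
      F (Function.update x w true)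
      = ∑ x ∈ univ.filter (fun x : Fin n → Bool => ¬ x w = false), F x := by
    apply Finset.sum_nbij' (fun x => Function.update x w true)
      (fun x => Function.update x w false)
    · intro a _; simp
    · intro a _; simp
    · intro a ha
      simp only [Finset.mem_filter, Finset.mem_univ, true_and] at ha
      funext u; by_cases h : u = w
      · subst h; simp [ha]
      · simp [Function.update_of_ne h]
    · intro a ha
      simp only [Finset.mem_filter, Finset.mem_univ, true_and, Bool.not_eq_false] at ha
      funext u; by_cases h : u = w
      · subst h; simp [ha]
      · simp [Function.update_of_ne h]
    · intro a _; rfl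
  rw [h1, Finset.sum_filter_add_sum_filter_not]

lemma key (B : BayesNet n) (rank : Fin n → ℕ)
    (hrank : ∀ v u, u ∈ B.pa v → rank u < rank v) (R : Finset (Fin n)) :
    (∀ v ∈ R, B.pa v ⊆ R) → ∀ S T : Finset (Fin n), S ⊆ R → T ⊆ R →
    ∑ x : Fin n → Bool, (∏ v ∈ R, B.pfac v x) * (B.phiS S x * B.phiS T x)
      = (if S = T then (1:ℝ) else 0) * 2 ^ (n - R.card) := by
  induction R using Finset.strongInduction with
  | _ R ih =>
  intro hR S T hS hT
  rcases R.eq_empty_or_nonempty with rfl | hne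
  · rw [Finset.subset_empty] at hS hT
    subst hS; subst hT
    simp only [phiS, Finset.prod_empty, one_mul, mul_one, if_pos rfl, Finset.card_empty,
      Nat.sub_zero, Finset.sum_const, Finset.card_univ, Fintype.card_fun, Fintype.card_bool,
      Fintype.card_fin, nsmul_eq_mul, mul_one]
    push_cast; ring
  · obtain ⟨w, hwR, hwmax⟩ := R.exists_max_image rank hne
    have hwpa : ∀ v ∈ R, w ∉ B.pa v := fun v hv hmem =>
      absurd (hrank v w hmem) (not_lt.2 (hwmax v hv))
    have hwpaw : w ∉ B.pa w := hwpa w hwR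
    have hcard1 : 1 ≤ R.card := Finset.card_pos.2 ⟨w, hwR⟩
    have hcardn : R.card ≤ n := by
      simpa using Finset.card_le_univ R
    set A : (Fin n → Bool) → ℝ := fun x =>
      (∏ v ∈ R.erase w, B.pfac v x) * (B.phiS (S.erase w) x * B.phiS (T.erase w) x) with hA
    have hAinv : ∀ (x : Fin n → Bool) (b : Bool), A (Function.update x w b) = A x := by
      intro x b
      simp only [hA, phiS]
      congr 1
      · exact Finset.prod_congr rfl fun v hv =>
          B.pfac_update (Finset.ne_of_mem_erase hv) (hwpa v (Finset.mem_of_mem_erase hv)) x b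
      · congr 1
        · exact Finset.prod_congr rfl fun v hv =>
            B.phi_update (Finset.ne_of_mem_erase hv)
              (hwpa v (hS (Finset.mem_of_mem_erase hv))) x b
        · exact Finset.prod_congr rfl fun v hv =>
            B.phi_update (Finset.ne_of_mem_erase hv)
              (hwpa v (hT (Finset.mem_of_mem_erase hv))) x b
    -- sum of A over full cube, via induction hypothesis
    have hclos : ∀ v ∈ R.erase w, B.pa v ⊆ R.erase w := fun v hv =>
      Finset.subset_erase.2 ⟨hR v (Finset.mem_of_mem_erase hv),
        hwpa v (Finset.mem_of_mem_erase hv)⟩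
    have hIH := ih (R.erase w) (Finset.erase_ssubset hwR) hclos (S.erase w) (T.erase w)
      (Finset.erase_subset_erase w hS) (Finset.erase_subset_erase w hT)
    rw [Finset.card_erase_of_mem hwR] at hIH
    have hchalf : ∑ x ∈ univ.filter (fun x : Fin n → Bool => x w = false), A x
        = (∑ x : Fin n → Bool, A x) / 2 := by
      have h2 : ∑ x : Fin n → Bool, A x
          = 2 * ∑ x ∈ univ.filter (fun x : Fin n → Bool => x w = false), A x := by
        rw [sum_split w A, Finset.mul_sum]
        exact Finset.sum_congr rfl fun x _ => by rw [hAinv]; ring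
      rw [h2]; ring
    have hnsub : n - (R.card - 1) = (n - R.card) + 1 := by omega
    -- pointwise values at w
    have hval : ∀ x : Fin n → Bool, x w = false →
        B.pfac w x = 1 - B.cond w x ∧
        B.pfac w (Function.update x w true) = B.cond w x ∧
        B.phi w x = (0 - B.cond w x) / B.sigma w x ∧
        B.phi w (Function.update x w true) = (1 - B.cond w x) / B.sigma w x := by
      intro x hxw
      refine ⟨by simp [pfac, hxw], ?_, by simp [phi, b2r, hxw], ?_⟩
      · simp [pfac, Function.update_self, B.cond_update hwpaw]
      · simp [phi, b2r, Function.update_self, B.cond_update hwpaw, B.sigma_update hwpaw]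
    have hdecomp : ∀ x : Fin n → Bool,
        (∏ v ∈ R, B.pfac v x) * (B.phiS S x * B.phiS T x)
          = B.pfac w x * ((if w ∈ S then B.phi w x else 1) *
              (if w ∈ T then B.phi w x else 1)) * A x := by
      intro x
      simp only [hA, phiS]
      rw [← Finset.mul_prod_erase R _ hwR]
      by_cases hwS : w ∈ S <;> by_cases hwT : w ∈ T
      · rw [if_pos hwS, if_pos hwT, ← Finset.mul_prod_erase S _ hwS,
          ← Finset.mul_prod_erase T _ hwT]; ring
      · rw [if_pos hwS, if_neg hwT, ← Finset.mul_prod_erase S _ hwS,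
          Finset.erase_eq_of_notMem hwT]; ring
      · rw [if_neg hwS, if_pos hwT, ← Finset.mul_prod_erase T _ hwT,
          Finset.erase_eq_of_notMem hwS]; ring
      · rw [if_neg hwS, if_neg hwT, Finset.erase_eq_of_notMem hwS,
          Finset.erase_eq_of_notMem hwT]; ring
    rw [sum_split w (fun x => (∏ v ∈ R, B.pfac v x) * (B.phiS S x * B.phiS T x))]
    by_cases hwS : w ∈ S <;> by_cases hwT : w ∈ T
    · -- w ∈ S ∩ T
      have hST : S = T ↔ S.erase w = T.erase w := by
        constructor
        · intro h; rw [h]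
        · intro h
          rw [← Finset.insert_erase hwS, ← Finset.insert_erase hwT, h]
      have hpair : ∀ x ∈ univ.filter (fun x : Fin n → Bool => x w = false),
          (∏ v ∈ R, B.pfac v x) * (B.phiS S x * B.phiS T x)
            + (∏ v ∈ R, B.pfac v (Function.update x w true)) *
              (B.phiS S (Function.update x w true) * B.phiS T (Function.update x w true))
          = A x := by
        intro x hx
        have hxw : x w = false := by
          simpa using (Finset.mem_filter.1 hx).2
        obtain ⟨e1, e2, e3, e4⟩ := hval x hxw
        rw [hdecomp x, hdecomp (Function.update x w true), hAinv]
        simp only [if_pos hwS, if_pos hwT]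
        rw [e1, e2, e3, e4]
        have hσ : B.sigma w x ^ 2 = B.cond w x * (1 - B.cond w x) := B.sigma_sq w x
        have h0 : (0:ℝ) < B.cond w x := B.cond_pos w x
        have h1 : B.cond w x < 1 := B.cond_lt_one w x
        have hσ0 : B.sigma w x ≠ 0 := ne_of_gt (B.sigma_pos w x)
        have hbr : (1 - B.cond w x) * ((0 - B.cond w x) / B.sigma w x *
              ((0 - B.cond w x) / B.sigma w x))
            + B.cond w x * ((1 - B.cond w x) / B.sigma w x *
              ((1 - B.cond w x) / B.sigma w x)) = 1 := by
          field_simp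
          nlinarith [hσ]
        linear_combination A x * hbr
      rw [Finset.sum_congr rfl hpair, hchalf, hIH, hnsub]
      by_cases h : S = T
      · rw [if_pos h, if_pos (hST.1 h), pow_succ]; ring
      · rw [if_neg h, if_neg (fun hh => h (hST.2 hh))]; ring
    · -- w ∈ S \ T
      have hne' : S ≠ T := fun h => hwT (h ▸ hwS)
      rw [if_neg hne', zero_mul]
      apply Finset.sum_eq_zero
      intro x hx
      have hxw : x w = false := by simpa using (Finset.mem_filter.1 hx).2
      obtain ⟨e1, e2, e3, e4⟩ := hval x hxw
      rw [hdecomp x, hdecomp (Function.update x w true), hAinv]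
      simp only [if_pos hwS, if_neg hwT]
      rw [e1, e2, e3, e4]
      ring
    · -- w ∈ T \ S
      have hne' : S ≠ T := fun h => hwS (h ▸ hwT)
      rw [if_neg hne', zero_mul]
      apply Finset.sum_eq_zero
      intro x hx
      have hxw : x w = false := by simpa using (Finset.mem_filter.1 hx).2
      obtain ⟨e1, e2, e3, e4⟩ := hval x hxw
      rw [hdecomp x, hdecomp (Function.update x w true), hAinv]
      simp only [if_neg hwS, if_pos hwT]
      rw [e1, e2, e3, e4]
      ring
    · -- w ∉ S ∪ T
      have hpair : ∀ x ∈ univ.filter (fun x : Fin n → Bool => x w = false),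
          (∏ v ∈ R, B.pfac v x) * (B.phiS S x * B.phiS T x)
            + (∏ v ∈ R, B.pfac v (Function.update x w true)) *
              (B.phiS S (Function.update x w true) * B.phiS T (Function.update x w true))
          = A x := by
        intro x hx
        have hxw : x w = false := by simpa using (Finset.mem_filter.1 hx).2
        obtain ⟨e1, e2, _, _⟩ := hval x hxw
        rw [hdecomp x, hdecomp (Function.update x w true), hAinv]
        simp only [if_neg hwS, if_neg hwT]
        rw [e1, e2]
        ring
      rw [Finset.sum_congr rfl hpair, hchalf, hIH, hnsub, pow_succ,
        Finset.erase_eq_of_notMem hwS, Finset.erase_eq_of_notMem hwT]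
      ring

lemma orthonormal (B : BayesNet n) (S T : Finset (Fin n)) :
    ∑ x : Fin n → Bool, B.prob x * (B.phiS S x * B.phiS T x)
      = if S = T then (1:ℝ) else 0 := by
  obtain ⟨rank, hrank⟩ := B.acyclic
  have h := B.key rank hrank Finset.univ (fun v _ => Finset.subset_univ _) S T
    (Finset.subset_univ _) (Finset.subset_univ _)
  simp only [Finset.card_univ, Fintype.card_fin, Nat.sub_self, pow_zero, mul_one] at h
  rw [← h]
  exact Finset.sum_congr rfl fun x _ => by rw [prob_eq]

lemma prob_sum (B : BayesNet n) : ∑ x : Fin n → Bool, B.prob x = 1 := by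
  have h := B.orthonormal ∅ ∅
  simpa [phiS] using h

lemma bessel (B : BayesNet n) (f : (Fin n → Bool) → ℝ) :
    ∑ S : Finset (Fin n), B.coeff f S ^ 2 ≤ ∑ x : Fin n → Bool, B.prob x * f x ^ 2 := by
  set P : (Fin n → Bool) → ℝ := fun x => ∑ S : Finset (Fin n), B.coeff f S * B.phiS S x
    with hP
  have hcoeff : ∀ S : Finset (Fin n),
      B.coeff f S = ∑ x : Fin n → Bool, B.prob x * (f x * B.phiS S x) := fun S => rfl
  have hfP : ∑ x : Fin n → Bool, B.prob x * (f x * P x)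
      = ∑ S : Finset (Fin n), B.coeff f S ^ 2 := by
    calc ∑ x : Fin n → Bool, B.prob x * (f x * P x)
        = ∑ x : Fin n → Bool, ∑ S : Finset (Fin n),
            B.coeff f S * (B.prob x * (f x * B.phiS S x)) := by
          refine Finset.sum_congr rfl fun x _ => ?_
          rw [hP, Finset.mul_sum, Finset.mul_sum]
          exact Finset.sum_congr rfl fun S _ => by ring
      _ = ∑ S : Finset (Fin n), ∑ x : Fin n → Bool,
            B.coeff f S * (B.prob x * (f x * B.phiS S x)) := Finset.sum_comm
      _ = ∑ S : Finset (Fin n), B.coeff f S ^ 2 := by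
          refine Finset.sum_congr rfl fun S _ => ?_
          rw [← Finset.mul_sum, ← hcoeff, sq]
  have hPP : ∑ x : Fin n → Bool, B.prob x * P x ^ 2
      = ∑ S : Finset (Fin n), B.coeff f S ^ 2 := by
    calc ∑ x : Fin n → Bool, B.prob x * P x ^ 2
        = ∑ x : Fin n → Bool, ∑ S : Finset (Fin n), ∑ T : Finset (Fin n),
            B.coeff f S * B.coeff f T * (B.prob x * (B.phiS S x * B.phiS T x)) := by
          refine Finset.sum_congr rfl fun x _ => ?_
          rw [hP, sq, Finset.sum_mul_sum, Finset.mul_sum]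
          refine Finset.sum_congr rfl fun S _ => ?_
          rw [Finset.mul_sum]
          exact Finset.sum_congr rfl fun T _ => by ring
      _ = ∑ S : Finset (Fin n), ∑ T : Finset (Fin n),
            B.coeff f S * B.coeff f T *
              (∑ x : Fin n → Bool, B.prob x * (B.phiS S x * B.phiS T x)) := by
          rw [Finset.sum_comm]
          refine Finset.sum_congr rfl fun S _ => ?_
          rw [Finset.sum_comm]
          exact Finset.sum_congr rfl fun T _ => by rw [Finset.mul_sum]
      _ = ∑ S : Finset (Fin n), B.coeff f S ^ 2 := by
          refine Finset.sum_congr rfl fun S _ => ?_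
          simp only [B.orthonormal, mul_ite, mul_one, mul_zero]
          rw [Finset.sum_ite_eq Finset.univ S (fun T => B.coeff f S * B.coeff f T)]
          simp [sq]
  have h0 : 0 ≤ ∑ x : Fin n → Bool, B.prob x * (f x - P x) ^ 2 :=
    Finset.sum_nonneg fun x _ => mul_nonneg (B.prob_pos x).le (sq_nonneg _)
  have hexp : ∑ x : Fin n → Bool, B.prob x * (f x - P x) ^ 2
      = ∑ x : Fin n → Bool, B.prob x * f x ^ 2
        - 2 * ∑ x : Fin n → Bool, B.prob x * (f x * P x)
        + ∑ x : Fin n → Bool, B.prob x * P x ^ 2 := by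
    have e : ∀ x : Fin n → Bool, B.prob x * (f x - P x) ^ 2
        = B.prob x * f x ^ 2 - 2 * (B.prob x * (f x * P x)) + B.prob x * P x ^ 2 :=
      fun x => by ring
    simp_rw [e]
    rw [Finset.sum_add_distrib, Finset.sum_sub_distrib, ← Finset.mul_sum]
  rw [hexp, hfP, hPP] at h0
  linarith

lemma coeff_vanish (B : BayesNet n) (J T0 T1 : Finset (Fin n))
    (hpa : ∀ v, B.pa v ⊆ J) (S : Finset (Fin n)) (w : Fin n) (hwS : w ∈ S)
    (hwC : w ∉ T0 ∪ T1) (hwJ : w ∉ J) :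
    B.coeff (conj T0 T1) S = 0 := by
  have hwpa : ∀ v, w ∉ B.pa v := fun v h => hwJ (hpa v h)
  have hwpaw : w ∉ B.pa w := hwpa w
  show ∑ x : Fin n → Bool, B.prob x * (conj T0 T1 x * B.phiS S x) = 0
  rw [sum_split w (fun x => B.prob x * (conj T0 T1 x * B.phiS S x))]
  apply Finset.sum_eq_zero
  intro x hx
  have hxw : x w = false := by simpa using (Finset.mem_filter.1 hx).2
  have hconj : conj T0 T1 (Function.update x w true) = conj T0 T1 x := by
    unfold conj
    congr 1
    · refine Finset.prod_congr rfl fun i hi => ?_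
      rw [Function.update_of_ne (by rintro rfl; exact hwC (Finset.mem_union_right T0 hi))]
    · refine Finset.prod_congr rfl fun j hj => ?_
      rw [Function.update_of_ne (by rintro rfl; exact hwC (Finset.mem_union_left T1 hj))]
  have hprob : ∀ y : Fin n → Bool, B.prob y = B.pfac w y * ∏ v ∈ univ.erase w, B.pfac v y :=
    fun y => (Finset.mul_prod_erase univ _ (Finset.mem_univ w)).symm
  have hrest : ∏ v ∈ univ.erase w, B.pfac v (Function.update x w true)
      = ∏ v ∈ univ.erase w, B.pfac v x :=
    Finset.prod_congr rfl fun v hv =>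
      B.pfac_update (Finset.ne_of_mem_erase hv) (hwpa v) x true
  have hphiS : ∀ y : Fin n → Bool, B.phiS S y = B.phi w y * B.phiS (S.erase w) y := by
    intro y
    simp only [phiS]
    exact (Finset.mul_prod_erase S _ hwS).symm
  have hphiSe : B.phiS (S.erase w) (Function.update x w true) = B.phiS (S.erase w) x := by
    simp only [phiS]
    exact Finset.prod_congr rfl fun v hv =>
      B.phi_update (Finset.ne_of_mem_erase hv) (hwpa v) x true
  have e1 : B.pfac w x = 1 - B.cond w x := by simp [pfac, hxw]
  have e2 : B.pfac w (Function.update x w true) = B.cond w x := by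
    simp [pfac, Function.update_self, B.cond_update hwpaw]
  have e3 : B.phi w x = (0 - B.cond w x) / B.sigma w x := by simp [phi, b2r, hxw]
  have e4 : B.phi w (Function.update x w true) = (1 - B.cond w x) / B.sigma w x := by
    simp [phi, b2r, Function.update_self, B.cond_update hwpaw, B.sigma_update hwpaw]
  rw [hprob x, hprob (Function.update x w true), hconj, hrest, hphiS x,
    hphiS (Function.update x w true), hphiSe, e1, e2, e3, e4]
  ring

end BayesNet

lemma conj_nonneg {n : ℕ} (T0 T1 : Finset (Fin n)) (x : Fin n → Bool) :
    0 ≤ conj T0 T1 x := by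
  unfold conj
  refine mul_nonneg (Finset.prod_nonneg fun i _ => ?_) (Finset.prod_nonneg fun j _ => ?_)
  · unfold b2r; split <;> norm_num
  · unfold b2r; split <;> norm_num

lemma conj_le_one {n : ℕ} (T0 T1 : Finset (Fin n)) (x : Fin n → Bool) :
    conj T0 T1 x ≤ 1 := by
  unfold conj
  refine mul_le_one₀ (Finset.prod_le_one (fun i _ => ?_) (fun i _ => ?_))
    (Finset.prod_nonneg fun j _ => ?_) (Finset.prod_le_one (fun j _ => ?_) (fun j _ => ?_))
  all_goals unfold b2r; split <;> norm_num

/-- spectral norm of conjunctions under generalized k-junta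
distributions. Let the BN have a set `J` of `k` nodes forming an arbitrary DAG
among themselves, with every other node having all of its parents inside `J`
(i.e. `pa v ⊆ J` for all `v`).  For a conjunction `f` with `d` literals over the
variable set `C = T0 ∪ T1`: `f̂_S = 0` whenever `S ⊄ C ∪ J` (so `f` has at most
`2^{k+d}` nonzero coefficients), and `L1(f) ≤ 2^{(k+d)/2}`. -/
theorem junta_L1_bound {n : ℕ} (B : BayesNet n) (k : ℕ)
    (J : Finset (Fin n)) (hJ : J.card = k)
    (hpa : ∀ v, B.pa v ⊆ J)
    (T0 T1 : Finset (Fin n)) (hdisj : Disjoint T0 T1)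
    (d : ℕ) (hd : (T0 ∪ T1).card = d) :
    (∀ S : Finset (Fin n), ¬ S ⊆ (T0 ∪ T1) ∪ J → B.coeff (conj T0 T1) S = 0) ∧
    (univ.filter (fun S : Finset (Fin n) => B.coeff (conj T0 T1) S ≠ 0)).card
        ≤ 2 ^ (k + d) ∧
    B.L1 (conj T0 T1) ≤ (2 : ℝ) ^ (((k : ℝ) + (d : ℝ)) / 2) := by
  set K : Finset (Fin n) := (T0 ∪ T1) ∪ J with hK
  have part1 : ∀ S : Finset (Fin n), ¬ S ⊆ K → B.coeff (conj T0 T1) S = 0 := by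
    intro S hS
    obtain ⟨w, hwS, hwK⟩ := Finset.not_subset.1 hS
    rw [hK, Finset.mem_union, not_or] at hwK
    exact B.coeff_vanish J T0 T1 hpa S w hwS hwK.1 hwK.2
  have hKcard : K.card ≤ k + d := by
    calc K.card ≤ (T0 ∪ T1).card + J.card := Finset.card_union_le _ _
    _ = k + d := by rw [hd, hJ]; ring
  refine ⟨part1, ?_, ?_⟩
  · -- cardinality bound
    have hsub : univ.filter (fun S : Finset (Fin n) => B.coeff (conj T0 T1) S ≠ 0)
        ⊆ K.powerset := by
      intro S hS
      rw [Finset.mem_powerset]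
      by_contra h
      exact (Finset.mem_filter.1 hS).2 (part1 S h)
    calc (univ.filter (fun S : Finset (Fin n) => B.coeff (conj T0 T1) S ≠ 0)).card
        ≤ K.powerset.card := Finset.card_le_card hsub
      _ = 2 ^ K.card := Finset.card_powerset K
      _ ≤ 2 ^ (k + d) := Nat.pow_le_pow_right (by norm_num) hKcard
  · -- L1 bound
    have hEf2 : ∑ x : Fin n → Bool, B.prob x * conj T0 T1 x ^ 2 ≤ 1 := by
      calc ∑ x : Fin n → Bool, B.prob x * conj T0 T1 x ^ 2
          ≤ ∑ x : Fin n → Bool, B.prob x := by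
            refine Finset.sum_le_sum fun x _ => ?_
            have h1 : conj T0 T1 x ^ 2 ≤ 1 := by
              nlinarith [conj_nonneg T0 T1 x, conj_le_one T0 T1 x]
            nlinarith [(B.prob_pos x).le]
        _ = 1 := B.prob_sum
    have hc2 : ∑ S : Finset (Fin n), B.coeff (conj T0 T1) S ^ 2 ≤ 1 :=
      le_trans (B.bessel (conj T0 T1)) hEf2
    have hc2' : ∑ S ∈ K.powerset, B.coeff (conj T0 T1) S ^ 2 ≤ 1 :=
      le_trans (Finset.sum_le_sum_of_subset_of_nonneg (Finset.subset_univ _)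
        (fun S _ _ => sq_nonneg _)) hc2
    have hL1eq : B.L1 (conj T0 T1) = ∑ S ∈ K.powerset, |B.coeff (conj T0 T1) S| := by
      refine (Finset.sum_subset (Finset.subset_univ _) fun S _ hS => ?_).symm
      rw [part1 S (by simpa [Finset.mem_powerset] using hS), abs_zero]
    have hCS := Finset.sum_mul_sq_le_sq_mul_sq K.powerset (fun _ => (1:ℝ))
      (fun S => |B.coeff (conj T0 T1) S|)
    simp only [one_mul, one_pow] at hCS
    have hcard : (K.powerset.card : ℝ) ≤ (2 : ℝ) ^ (k + d) := by
      rw [Finset.card_powerset]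
      calc ((2 ^ K.card : ℕ) : ℝ) ≤ ((2 ^ (k + d) : ℕ) : ℝ) := by
            exact_mod_cast Nat.pow_le_pow_right (by norm_num) hKcard
        _ = (2 : ℝ) ^ (k + d) := by push_cast; ring
    have habs : ∑ S ∈ K.powerset, |B.coeff (conj T0 T1) S| ^ 2
        = ∑ S ∈ K.powerset, B.coeff (conj T0 T1) S ^ 2 :=
      Finset.sum_congr rfl fun S _ => sq_abs _
    have hsq : B.L1 (conj T0 T1) ^ 2 ≤ (2 : ℝ) ^ (k + d) := by
      rw [hL1eq]
      calc (∑ S ∈ K.powerset, |B.coeff (conj T0 T1) S|) ^ 2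
          ≤ (∑ _S ∈ K.powerset, (1:ℝ)) * ∑ S ∈ K.powerset, |B.coeff (conj T0 T1) S| ^ 2 :=
            hCS
        _ ≤ (K.powerset.card : ℝ) * 1 := by
            rw [habs]
            refine mul_le_mul ?_ hc2' (Finset.sum_nonneg fun S _ => sq_nonneg _)
              (Nat.cast_nonneg _)
            simp
        _ ≤ (2 : ℝ) ^ (k + d) := by rw [mul_one]; exact hcard
    have hL1nn : 0 ≤ B.L1 (conj T0 T1) :=
      Finset.sum_nonneg fun S _ => abs_nonneg _
    have hb2 : ((2 : ℝ) ^ (((k : ℝ) + (d : ℝ)) / 2)) ^ 2 = (2 : ℝ) ^ (k + d) := by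
      rw [← Real.rpow_natCast ((2 : ℝ) ^ (((k : ℝ) + (d : ℝ)) / 2)) 2,
        ← Real.rpow_mul (by norm_num : (0:ℝ) ≤ 2)]
      norm_num
      rw [← Real.rpow_natCast 2 (k + d)]
      congr 1
      push_cast
      ring
    calc B.L1 (conj T0 T1) = Real.sqrt (B.L1 (conj T0 T1) ^ 2) :=
          (Real.sqrt_sq hL1nn).symm
      _ ≤ Real.sqrt (((2 : ℝ) ^ (((k : ℝ) + (d : ℝ)) / 2)) ^ 2) := by
          apply Real.sqrt_le_sqrt
          rw [hb2]
          exact hsq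
      _ = (2 : ℝ) ^ (((k : ℝ) + (d : ℝ)) / 2) :=
          Real.sqrt_sq (Real.rpow_nonneg (by norm_num) _)
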